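/- arXiv:2010.10770 — 2 statements merged into one kernel-verified Lean document; each statement's English description precedes it below -/
import Mathlib

section
/- Let K be an n×n real symmetric positive-definite matrix, F ∈ ℝⁿ, let U solve K U = F, let Ũ ∈ ℝⁿ be arbitrary, and set R = F − K Ũ. Let M be an n×n real symmetric matrix (representing the derivative dK/dμ of K with respect to a design parameter), let σ_min > 0 be the smallest eigenvalue of K, κ = ‖M‖ the operator (spectral) norm of M, and ν = ‖Ũ‖₂. Then the compliance-sensitivity error satisfies |Ũᵀ M Ũ − Uᵀ M U| ≤ (κ / σ_min²) ‖R‖₂² + 2 (κ ν / σ_min) ‖R‖₂. -/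
open Matrix
open scoped InnerProductSpace

/-- A posteriori residual-based error bound for the compliance sensitivity:
if `K` is symmetric positive definite with smallest eigenvalue `σmin > 0`,
`K U = F`, `R = F - K Ut`, `M` is symmetric (representing `dK/dμ`),
`κ = ‖M‖` is the spectral (operator) norm of `M` and `ν = ‖Ut‖₂`, then
`|Utᵀ M Ut − Uᵀ M U| ≤ (κ/σmin²) ‖R‖₂² + 2 (κ ν / σmin) ‖R‖₂`. -/
theorem compliance_sensitivity_error_bound {n : ℕ}
    (K : Matrix (Fin n) (Fin n) ℝ) (hK : K.PosDef)
    (F U Ut R : Fin n → ℝ) (hU : K *ᵥ U = F) (hR : R = F - K *ᵥ Ut)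
    (M : Matrix (Fin n) (Fin n) ℝ) (hM : M.IsSymm)
    (σmin : ℝ) (hσpos : 0 < σmin)
    (hσ : IsLeast (Set.range hK.isHermitian.eigenvalues) σmin)
    (κ ν : ℝ) (hκ : κ = ‖Matrix.toEuclideanCLM (𝕜 := ℝ) M‖)
    (hν : ν = Real.sqrt (Ut ⬝ᵥ Ut)) :
    |Ut ⬝ᵥ M *ᵥ Ut - U ⬝ᵥ M *ᵥ U| ≤
      (κ / σmin ^ 2) * Real.sqrt (R ⬝ᵥ R) ^ 2 +
        2 * (κ * ν / σmin) * Real.sqrt (R ⬝ᵥ R) := by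
  classical
  set E : Fin n → ℝ := U - Ut with hE
  have hKE : K *ᵥ E = R := by
    rw [hR, ← hU, hE, Matrix.mulVec_sub]
  -- translation to EuclideanSpace
  set f : (Fin n → ℝ) → EuclideanSpace ℝ (Fin n) := fun x => (WithLp.equiv 2 (Fin n → ℝ)).symm x with hf
  have hinner : ∀ x y : Fin n → ℝ, ⟪f x, f y⟫_ℝ = x ⬝ᵥ y := by
    intro x y
    simp [hf, PiLp.inner_apply, dotProduct, RCLike.inner_apply, mul_comm]
  have hnorm : ∀ x : Fin n → ℝ, ‖f x‖ = Real.sqrt (x ⬝ᵥ x) := by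
    intro x
    rw [← Real.sqrt_sq (norm_nonneg (f x)), ← real_inner_self_eq_norm_sq, hinner]
  have hCLM : ∀ x : Fin n → ℝ, toEuclideanCLM (𝕜 := ℝ) M (f x) = f (M *ᵥ x) :=
    fun x => Matrix.toEuclideanCLM_toLp M x
  -- symmetry manipulation
  have hsymm : ∀ (A : Matrix (Fin n) (Fin n) ℝ), A.IsSymm →
      ∀ x y : Fin n → ℝ, x ⬝ᵥ A *ᵥ y = (A *ᵥ x) ⬝ᵥ y := by
    intro A hA x y
    rw [Matrix.dotProduct_mulVec, ← Matrix.mulVec_transpose, hA.eq]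
  have hKsymm : K.IsSymm := by
    have := hK.isHermitian
    rwa [Matrix.IsHermitian, Matrix.conjTranspose_eq_transpose_of_trivial] at this
  -- spectral lower bound
  have key : ∀ x : Fin n → ℝ, σmin * ‖f x‖ ^ 2 ≤ x ⬝ᵥ K *ᵥ x := by
    intro x
    set b := hK.isHermitian.eigenvectorBasis with hb
    have hbf : ∀ i, f ⇑(b i) = b i := fun i => rfl
    have hKb : ∀ i, ⟪b i, f (K *ᵥ x)⟫_ℝ = hK.isHermitian.eigenvalues i * ⟪b i, f x⟫_ℝ := by
      intro i
      rw [← hbf i, hinner, hsymm K hKsymm, hK.isHermitian.mulVec_eigenvectorBasis,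
        smul_dotProduct, ← hinner, hbf]
      rfl
    have h1 : x ⬝ᵥ K *ᵥ x = ∑ i, hK.isHermitian.eigenvalues i * (⟪b i, f x⟫_ℝ) ^ 2 := by
      rw [← hinner x (K *ᵥ x), ← b.sum_inner_mul_inner (f x) (f (K *ᵥ x))]
      refine Finset.sum_congr rfl fun i _ => ?_
      rw [hKb i, real_inner_comm (f x) (b i)]
      ring
    have h2 : ‖f x‖ ^ 2 = ∑ i, (⟪b i, f x⟫_ℝ) ^ 2 := by
      rw [← real_inner_self_eq_norm_sq, ← b.sum_inner_mul_inner (f x) (f x)]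
      refine Finset.sum_congr rfl fun i _ => ?_
      rw [real_inner_comm (f x) (b i)]
      ring
    rw [h1, h2, Finset.mul_sum]
    refine Finset.sum_le_sum fun i _ => ?_
    exact mul_le_mul_of_nonneg_right (hσ.2 ⟨i, rfl⟩) (sq_nonneg _)
  -- residual bound : σmin * ‖f E‖ ≤ ‖f R‖
  have hEb : σmin * ‖f E‖ ≤ Real.sqrt (R ⬝ᵥ R) := by
    rcases eq_or_ne (‖f E‖) 0 with h0 | h0
    · rw [h0, mul_zero]
      exact Real.sqrt_nonneg _
    have hpos : 0 < ‖f E‖ := lt_of_le_of_ne (norm_nonneg _) (Ne.symm h0)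
    have h1 : σmin * ‖f E‖ ^ 2 ≤ E ⬝ᵥ K *ᵥ E := key E
    have h2 : E ⬝ᵥ K *ᵥ E ≤ ‖f E‖ * Real.sqrt (R ⬝ᵥ R) := by
      rw [hKE, ← hinner, ← hnorm]
      calc ⟪f E, f R⟫_ℝ ≤ |⟪f E, f R⟫_ℝ| := le_abs_self _
        _ ≤ ‖f E‖ * ‖f R‖ := abs_real_inner_le_norm _ _
    nlinarith [hpos]
  -- operator norm bound
  have hMb : ∀ x y : Fin n → ℝ, |x ⬝ᵥ M *ᵥ y| ≤ κ * (‖f x‖ * ‖f y‖) := by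
    intro x y
    rw [← hinner, ← hCLM]
    calc |⟪f x, toEuclideanCLM (𝕜 := ℝ) M (f y)⟫_ℝ|
        ≤ ‖f x‖ * ‖toEuclideanCLM (𝕜 := ℝ) M (f y)‖ := abs_real_inner_le_norm _ _
      _ ≤ ‖f x‖ * (‖toEuclideanCLM (𝕜 := ℝ) M‖ * ‖f y‖) := by
          exact mul_le_mul_of_nonneg_left ((toEuclideanCLM (𝕜 := ℝ) M).le_opNorm _)
            (norm_nonneg _)
      _ = κ * (‖f x‖ * ‖f y‖) := by rw [hκ]; ring
  -- algebraic identity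
  have hid : Ut ⬝ᵥ M *ᵥ Ut - U ⬝ᵥ M *ᵥ U = -(E ⬝ᵥ M *ᵥ E) - 2 * (E ⬝ᵥ M *ᵥ Ut) := by
    have hUeq : U = Ut + E := by simp [hE]
    have hx : Ut ⬝ᵥ M *ᵥ E = E ⬝ᵥ M *ᵥ Ut := by
      rw [hsymm M hM Ut E, dotProduct_comm]
    rw [hUeq]
    simp only [Matrix.mulVec_add, add_dotProduct, dotProduct_add, hx]
    ring
  -- put everything together
  have habs : |Ut ⬝ᵥ M *ᵥ Ut - U ⬝ᵥ M *ᵥ U| ≤ κ * (‖f E‖ * ‖f E‖) + 2 * (κ * (‖f E‖ * ‖f Ut‖)) := by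
    rw [hid]
    calc |-(E ⬝ᵥ M *ᵥ E) - 2 * (E ⬝ᵥ M *ᵥ Ut)|
        ≤ |E ⬝ᵥ M *ᵥ E| + 2 * |E ⬝ᵥ M *ᵥ Ut| := by
          rw [abs_sub_comm]
          calc |2 * (E ⬝ᵥ M *ᵥ Ut) - -(E ⬝ᵥ M *ᵥ E)|
              ≤ |2 * (E ⬝ᵥ M *ᵥ Ut)| + |-(E ⬝ᵥ M *ᵥ E)| := abs_sub _ _
            _ = |E ⬝ᵥ M *ᵥ E| + 2 * |E ⬝ᵥ M *ᵥ Ut| := by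
                rw [abs_neg, abs_mul, abs_two]; ring
      _ ≤ κ * (‖f E‖ * ‖f E‖) + 2 * (κ * (‖f E‖ * ‖f Ut‖)) := by
          have := hMb E E
          have := hMb E Ut
          linarith
  have hκnn : 0 ≤ κ := hκ ▸ norm_nonneg _
  have hνeq : ‖f Ut‖ = ν := by rw [hnorm, hν]
  have hrnn : 0 ≤ Real.sqrt (R ⬝ᵥ R) := Real.sqrt_nonneg _
  have hEnn : 0 ≤ ‖f E‖ := norm_nonneg _
  have hνnn : 0 ≤ ν := hνeq ▸ norm_nonneg _
  rw [hνeq] at habs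
  have b1 : κ * (‖f E‖ * ‖f E‖) ≤ κ / σmin ^ 2 * Real.sqrt (R ⬝ᵥ R) ^ 2 := by
    rw [div_mul_eq_mul_div, le_div_iff₀ (by positivity)]
    have h := mul_le_mul hEb hEb (by positivity) hrnn
    have h2 := mul_le_mul_of_nonneg_left h hκnn
    nlinarith [h2]
  have b2 : 2 * (κ * (‖f E‖ * ν)) ≤ 2 * (κ * ν / σmin) * Real.sqrt (R ⬝ᵥ R) := by
    have h : 2 * (κ * ν / σmin) * Real.sqrt (R ⬝ᵥ R) = 2 * (κ * ν) * Real.sqrt (R ⬝ᵥ R) / σmin := by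
      ring
    rw [h, le_div_iff₀ hσpos]
    have h2 := mul_le_mul_of_nonneg_left hEb (by positivity : (0:ℝ) ≤ 2 * (κ * ν))
    nlinarith [h2]
  exact habs.trans (add_le_add b1 b2)
end

section
/- Let S be an N×l real matrix, let A = S Sᵀ, which is symmetric positive semidefinite with eigenvalues λ₁ ≥ λ₂ ≥ … ≥ λ_N ≥ 0 listed in decreasing order, and let 1 ≤ k ≤ N. Then for every N×k real matrix χ with orthonormal columns (χᵀ χ = I_k), the POD objective satisfies the lower bound ‖S − χ χᵀ S‖_F² ≥ Σ_{i=k+1}^{N} λ_i. -/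
open Matrix

/-- The squared Frobenius norm of a real matrix: `‖A‖_F² = trace (Aᵀ A)`. -/
def frobSq {N l : ℕ} (A : Matrix (Fin N) (Fin l) ℝ) : ℝ := (Aᵀ * A).trace

private lemma card_filter_lt_fin {N k : ℕ} (hkN : k ≤ N) :
    (Finset.univ.filter (fun i : Fin N => (i : ℕ) < k)).card = k := by
  rw [← Finset.card_map ⟨Fin.val, Fin.val_injective⟩]
  have : (Finset.univ.filter (fun i : Fin N => (i : ℕ) < k)).map
      ⟨Fin.val, Fin.val_injective⟩ = Finset.range k := by
    ext x
    simp only [Finset.mem_map, Finset.mem_filter, Finset.mem_univ, true_and,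
      Function.Embedding.coeFn_mk, Finset.mem_range]
    constructor
    · rintro ⟨i, hi, rfl⟩; exact hi
    · intro hx; exact ⟨⟨x, by omega⟩, hx, rfl⟩
  rw [this, Finset.card_range]

private lemma key_rearrange {N k : ℕ} (lam v : Fin N → ℝ) (hdec : Antitone lam)
    (hv0 : ∀ i, 0 ≤ v i) (hv1 : ∀ i, v i ≤ 1) (hsum : ∑ i, v i = k)
    (hk1 : 1 ≤ k) (hkN : k ≤ N) :
    ∑ i, lam i * v i ≤ ∑ i ∈ Finset.univ.filter (fun i : Fin N => (i : ℕ) < k), lam i := by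
  set t : ℝ := lam ⟨k - 1, by omega⟩ with ht
  have hcard : (Finset.univ.filter (fun i : Fin N => (i : ℕ) < k)).card = k :=
    card_filter_lt_fin hkN
  have hsplit := Finset.sum_filter_add_sum_filter_not Finset.univ
    (fun i : Fin N => (i : ℕ) < k) (fun i => lam i * v i)
  have hvsplit := Finset.sum_filter_add_sum_filter_not Finset.univ
    (fun i : Fin N => (i : ℕ) < k) v
  have h1 : ∑ i ∈ Finset.univ.filter (fun i : Fin N => (i : ℕ) < k), (lam i * v i - lam i)
      ≤ ∑ i ∈ Finset.univ.filter (fun i : Fin N => (i : ℕ) < k), t * (v i - 1) := by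
    apply Finset.sum_le_sum
    intro i hi
    simp only [Finset.mem_filter, Finset.mem_univ, true_and] at hi
    have hlt : t ≤ lam i := hdec (by simp only [Fin.le_def]; omega)
    nlinarith [hv1 i]
  have h2 : ∑ i ∈ Finset.univ.filter (fun i : Fin N => ¬ (i : ℕ) < k), lam i * v i
      ≤ ∑ i ∈ Finset.univ.filter (fun i : Fin N => ¬ (i : ℕ) < k), t * v i := by
    apply Finset.sum_le_sum
    intro i hi
    simp only [Finset.mem_filter, Finset.mem_univ, true_and] at hi
    have hlt : lam i ≤ t := hdec (by simp only [Fin.le_def]; omega)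
    nlinarith [hv0 i]
  have e1 : ∑ i ∈ Finset.univ.filter (fun i : Fin N => (i : ℕ) < k), t * (v i - 1)
      + ∑ i ∈ Finset.univ.filter (fun i : Fin N => ¬ (i : ℕ) < k), t * v i = 0 := by
    rw [← Finset.mul_sum, ← Finset.mul_sum, ← mul_add, Finset.sum_sub_distrib,
      Finset.sum_const, hcard]
    have hvs : (∑ i ∈ Finset.univ.filter (fun i : Fin N => (i : ℕ) < k), v i)
        + ∑ i ∈ Finset.univ.filter (fun i : Fin N => ¬ (i : ℕ) < k), v i = (k : ℝ) := by
      rw [hvsplit, hsum]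
    simp only [nsmul_eq_mul, mul_one]
    have h0 : (∑ i ∈ Finset.univ.filter (fun i : Fin N => (i : ℕ) < k), v i) - (k : ℝ)
        + ∑ i ∈ Finset.univ.filter (fun i : Fin N => ¬ (i : ℕ) < k), v i = 0 := by
      linarith
    rw [h0, mul_zero]
  have hsum1 : ∑ i ∈ Finset.univ.filter (fun i : Fin N => (i : ℕ) < k), (lam i * v i - lam i)
      = ∑ i ∈ Finset.univ.filter (fun i : Fin N => (i : ℕ) < k), lam i * v i
        - ∑ i ∈ Finset.univ.filter (fun i : Fin N => (i : ℕ) < k), lam i :=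
    Finset.sum_sub_distrib _ _
  linarith

/-- POD optimality lower bound: let `lam` list the eigenvalues of `A = S Sᵀ` in
decreasing order (`lam 0 = λ₁ ≥ … ≥ lam (N-1) = λ_N`). Then for `1 ≤ k ≤ N` and any
`N×k` matrix `χ` with orthonormal columns, the POD objective is bounded below by the
sum of the `N − k` trailing eigenvalues:
`‖S − χ χᵀ S‖_F² ≥ ∑_{i=k+1}^{N} λᵢ`. -/
theorem pod_lower_bound {N l k : ℕ}
    (S : Matrix (Fin N) (Fin l) ℝ)
    (hA : (S * Sᵀ).IsHermitian)
    (lam : Fin N → ℝ) (hdec : Antitone lam)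
    (hlam : ∃ σ : Equiv.Perm (Fin N), lam = hA.eigenvalues ∘ σ)
    (hk1 : 1 ≤ k) (hkN : k ≤ N)
    (χ : Matrix (Fin N) (Fin k) ℝ) (hχ : χᵀ * χ = 1) :
    ∑ i ∈ Finset.univ.filter (fun i : Fin N => k ≤ (i : ℕ)), lam i ≤
      frobSq (S - χ * χᵀ * S) := by
  obtain ⟨σ, hσ⟩ := hlam
  set A := S * Sᵀ with hAdef
  set U : Matrix (Fin N) (Fin N) ℝ := (hA.eigenvectorUnitary : Matrix (Fin N) (Fin N) ℝ) with hU
  set d : Fin N → ℝ := hA.eigenvalues with hd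
  have hUU : Uᵀ * U = 1 := by
    have := (Matrix.mem_unitaryGroup_iff').mp hA.eigenvectorUnitary.2
    rwa [star_eq_conjTranspose, conjTranspose_eq_transpose_of_trivial] at this
  have hUU' : U * Uᵀ = 1 := by
    have := (Matrix.mem_unitaryGroup_iff).mp hA.eigenvectorUnitary.2
    rwa [star_eq_conjTranspose, conjTranspose_eq_transpose_of_trivial] at this
  have hspec : A = U * diagonal d * Uᵀ := by
    have h := hA.spectral_theorem
    rw [Unitary.conjStarAlgAut_apply, star_eq_conjTranspose, conjTranspose_eq_transpose_of_trivial,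
      RCLike.ofReal_real_eq_id] at h
    simpa using h
  set B : Matrix (Fin N) (Fin k) ℝ := Uᵀ * χ with hB
  have hBT : Bᵀ = χᵀ * U := by
    rw [hB, transpose_mul, transpose_transpose]
  have hBtB : Bᵀ * B = 1 := by
    rw [hBT, hB, Matrix.mul_assoc, ← Matrix.mul_assoc U, hUU', Matrix.one_mul, hχ]
  set M : Matrix (Fin N) (Fin N) ℝ := B * Bᵀ with hM
  have hMsymm : Mᵀ = M := by rw [hM, transpose_mul, transpose_transpose]
  have hMidem : M * M = M := by
    rw [hM, Matrix.mul_assoc, ← Matrix.mul_assoc Bᵀ, hBtB, Matrix.one_mul]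
  set w : Fin N → ℝ := fun i => M i i with hw
  have hw0 : ∀ i, 0 ≤ w i := by
    intro i
    rw [hw]
    simp only [hM, mul_apply]
    apply Finset.sum_nonneg
    intro j _
    rw [transpose_apply]
    exact mul_self_nonneg _
  have hwsq : ∀ i, w i ^ 2 ≤ w i := by
    intro i
    have h1 : (M * M) i i = ∑ j, M i j ^ 2 := by
      rw [mul_apply]
      apply Finset.sum_congr rfl
      intro j _
      have hsym' : M j i = M i j := by
        conv_lhs => rw [← hMsymm]
        rw [transpose_apply]
      rw [hsym', sq]
    have h2 : M i i ^ 2 ≤ ∑ j, M i j ^ 2 :=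
      Finset.single_le_sum (fun j _ => sq_nonneg (M i j)) (Finset.mem_univ i)
    rw [← h1, hMidem] at h2
    exact h2
  have hw1 : ∀ i, w i ≤ 1 := by
    intro i
    nlinarith [hwsq i, hw0 i]
  have hsumw : ∑ i, w i = (k : ℝ) := by
    have : ∑ i, w i = M.trace := by rw [trace]; rfl
    rw [this, hM, trace_mul_comm, hBtB, trace_one]
    simp
  have htrA : A.trace = ∑ i, d i := by
    rw [hspec, trace_mul_comm, ← Matrix.mul_assoc, hUU, Matrix.one_mul, trace_diagonal]
  have htrχ : (χᵀ * A * χ).trace = ∑ i, d i * w i := by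
    have h1 : χᵀ * A * χ = Bᵀ * diagonal d * B := by
      rw [hspec, hBT, hB]
      simp only [Matrix.mul_assoc]
    rw [h1, Matrix.mul_assoc, trace_mul_comm, Matrix.mul_assoc, ← hM]
    rw [trace]
    apply Finset.sum_congr rfl
    intro i _
    simp [diagonal_mul, hw]
  have hfrob : frobSq (S - χ * χᵀ * S) = A.trace - (χᵀ * A * χ).trace := by
    have hexp : (S - χ * χᵀ * S)ᵀ * (S - χ * χᵀ * S)
        = Sᵀ * S - Sᵀ * (χ * (χᵀ * S)) := by
      have hcol : χᵀ * (χ * (χᵀ * S)) = χᵀ * S := by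
        rw [← Matrix.mul_assoc, hχ, Matrix.one_mul]
      have hPt : (χ * χᵀ * S)ᵀ = Sᵀ * (χ * χᵀ) := by
        rw [transpose_mul, transpose_mul, transpose_transpose]
      rw [transpose_sub, hPt, Matrix.sub_mul, Matrix.mul_sub, Matrix.mul_sub]
      simp only [Matrix.mul_assoc, hcol]
      abel
    rw [frobSq, hexp, trace_sub]
    congr 1
    · rw [trace_mul_comm]
    · rw [hAdef, ← Matrix.mul_assoc, trace_mul_comm, Matrix.mul_assoc, ← Matrix.mul_assoc S,
        ← Matrix.mul_assoc, ← Matrix.mul_assoc]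
  have hkey : ∑ i, d i * w i ≤ ∑ i ∈ Finset.univ.filter (fun i : Fin N => (i : ℕ) < k), lam i := by
    have hv := key_rearrange lam (fun i => w (σ i)) hdec (fun i => hw0 _) (fun i => hw1 _)
      (by rw [← hsumw]; exact Equiv.sum_comp σ w) hk1 hkN
    have : ∑ i, lam i * w (σ i) = ∑ i, d i * w i := by
      rw [hσ]
      exact Equiv.sum_comp σ (fun i => d i * w i)
    rwa [this] at hv
  have hsumlam : ∑ i, lam i = ∑ i, d i := by
    rw [hσ]; exact Equiv.sum_comp σ d
  have hsplit := Finset.sum_filter_add_sum_filter_not Finset.univ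
    (fun i : Fin N => (i : ℕ) < k) lam
  have hfeq : Finset.univ.filter (fun i : Fin N => ¬ (i : ℕ) < k)
      = Finset.univ.filter (fun i : Fin N => k ≤ (i : ℕ)) := by
    apply Finset.filter_congr
    intro i _
    simp [not_lt]
  rw [hfeq] at hsplit
  rw [hfrob, htrA, htrχ]
  linarith
end
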